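/- arXiv:2306.10789 — 3 statements merged into one kernel-verified Lean document; each statement's English description precedes it below -/
import Mathlib

section
/- Let X₁,…,Xₙ be points in ℝ^d, u ∈ ℝ^d with ‖u‖ < 1, and suppose q̂ ∈ ℝ^d minimizes q ↦ (1/n) Σᵢ (‖Xᵢ − q‖ − ⟨u, q⟩). Then for every h ∈ ℝ^d, | ⟨u, h⟩ + (1/n) Σ_{i : Xᵢ ≠ q̂} ⟨(Xᵢ − q̂)/‖Xᵢ − q̂‖, h⟩ | ≤ (‖h‖/n) · #{i : Xᵢ = q̂}. -/
open scoped RealInnerProductSpace Classical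

lemma aux_norm_bound {E : Type*} [NormedAddCommGroup E] [InnerProductSpace ℝ E]
    (a h : E) (ha : a ≠ 0) (t : ℝ) :
    ‖a - t • h‖ - ‖a‖ ≤ -(t * ⟪‖a‖⁻¹ • a, h⟫) + t * (t * ‖h‖ ^ 2 / (2 * ‖a‖)) := by
  have hna : (0:ℝ) < ‖a‖ := norm_pos_iff.mpr ha
  rw [real_inner_smul_left]
  rw [← mul_le_mul_iff_right₀ hna]
  have hexp : ‖a - t • h‖ ^ 2 = ‖a‖ ^ 2 - 2 * (t * ⟪a, h⟫) + t ^ 2 * ‖h‖ ^ 2 := by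
    rw [@norm_sub_sq_real, real_inner_smul_right, norm_smul]
    simp [mul_pow, sq_abs]
  have hamgm : 2 * ‖a‖ * ‖a - t • h‖ ≤ ‖a‖ ^ 2 + ‖a - t • h‖ ^ 2 := two_mul_le_add_sq _ _
  have hR : ‖a‖ * (-(t * (‖a‖⁻¹ * ⟪a, h⟫)) + t * (t * ‖h‖ ^ 2 / (2 * ‖a‖)))
      = -(t * ⟪a, h⟫) + t ^ 2 * ‖h‖ ^ 2 / 2 := by
    field_simp
  rw [hR]
  nlinarith [hamgm, hexp, norm_nonneg (a - t • h)]

theorem stmt_7 {d n : ℕ} (hn : 0 < n) (X : Fin n → EuclideanSpace ℝ (Fin d))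
    (u : EuclideanSpace ℝ (Fin d)) (hu : ‖u‖ < 1) (qhat : EuclideanSpace ℝ (Fin d))
    (hmin : ∀ q : EuclideanSpace ℝ (Fin d),
      (1 / (n : ℝ)) * ∑ i, (‖X i - qhat‖ - ⟪u, qhat⟫) ≤
      (1 / (n : ℝ)) * ∑ i, (‖X i - q‖ - ⟪u, q⟫)) :
    ∀ h : EuclideanSpace ℝ (Fin d),
      |⟪u, h⟫ + (1 / (n : ℝ)) * ∑ i ∈ Finset.univ.filter (fun i => X i ≠ qhat),
          ⟪‖X i - qhat‖⁻¹ • (X i - qhat), h⟫| ≤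
        (‖h‖ / (n : ℝ)) * ((Finset.univ.filter (fun i => X i = qhat)).card : ℝ) := by
  have npos : (0:ℝ) < n := Nat.cast_pos.mpr hn
  set k : ℝ := ((Finset.univ.filter (fun i => X i = qhat)).card : ℝ) with hkdef
  have hk0 : (0:ℝ) ≤ k := Nat.cast_nonneg _
  set S : EuclideanSpace ℝ (Fin d) → ℝ := fun h =>
    ∑ i ∈ Finset.univ.filter (fun i => X i ≠ qhat),
      ⟪‖X i - qhat‖⁻¹ • (X i - qhat), h⟫ with hSdef
  have key : ∀ h : EuclideanSpace ℝ (Fin d),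
      (n:ℝ) * ⟪u, h⟫ + S h ≤ ‖h‖ * k := by
    intro h
    set C : ℝ := ∑ i ∈ Finset.univ.filter (fun i => X i ≠ qhat),
      ‖h‖ ^ 2 / (2 * ‖X i - qhat‖) with hCdef
    have hC0 : 0 ≤ C := Finset.sum_nonneg (fun i hi => by positivity)
    have step : ∀ t : ℝ, 0 < t → (n:ℝ) * ⟪u, h⟫ + S h ≤ ‖h‖ * k + t * C := by
      intro t ht
      have hmin' := hmin (qhat + t • h)
      have h1 : ∑ i, (‖X i - qhat‖ - ⟪u, qhat⟫) ≤
          ∑ i, (‖X i - (qhat + t • h)‖ - ⟪u, qhat + t • h⟫) :=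
        (mul_le_mul_iff_right₀ (by positivity : (0:ℝ) < 1 / n)).mp hmin'
      have hiq : ⟪u, qhat + t • h⟫ = ⟪u, qhat⟫ + t * ⟪u, h⟫ := by
        rw [inner_add_right, real_inner_smul_right]
      have h2 : (n:ℝ) * (t * ⟪u, h⟫) ≤
          ∑ i, (‖X i - (qhat + t • h)‖ - ‖X i - qhat‖) := by
        have e1 : ∑ i, (‖X i - qhat‖ - ⟪u, qhat⟫) =
            (∑ i, ‖X i - qhat‖) - n * ⟪u, qhat⟫ := by
          rw [Finset.sum_sub_distrib, Finset.sum_const]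
          simp [Finset.card_univ, mul_comm]
        have e2 : ∑ i, (‖X i - (qhat + t • h)‖ - ⟪u, qhat + t • h⟫) =
            (∑ i, ‖X i - (qhat + t • h)‖) - n * ⟪u, qhat⟫ - n * (t * ⟪u, h⟫) := by
          rw [Finset.sum_sub_distrib, Finset.sum_const, hiq]
          simp [Finset.card_univ]
          ring
        rw [e1, e2] at h1
        have e3 : ∑ i, (‖X i - (qhat + t • h)‖ - ‖X i - qhat‖) =
            (∑ i, ‖X i - (qhat + t • h)‖) - ∑ i, ‖X i - qhat‖ := by
          rw [Finset.sum_sub_distrib]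
        linarith
      have h3 : ∑ i, (‖X i - (qhat + t • h)‖ - ‖X i - qhat‖) ≤
          t * (‖h‖ * k) + (-(t * S h) + t * (t * C)) := by
        rw [← Finset.sum_filter_add_sum_filter_not Finset.univ (fun i => X i = qhat)]
        have hEq : ∑ i ∈ Finset.univ.filter (fun i => X i = qhat),
            (‖X i - (qhat + t • h)‖ - ‖X i - qhat‖) = t * (‖h‖ * k) := by
          have hterm : ∀ i ∈ Finset.univ.filter (fun i => X i = qhat),
              ‖X i - (qhat + t • h)‖ - ‖X i - qhat‖ = t * ‖h‖ := by
            intro i hi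
            have hx : X i = qhat := (Finset.mem_filter.mp hi).2
            rw [hx, show qhat - (qhat + t • h) = -(t • h) by abel]
            simp [norm_smul, abs_of_pos ht]
          rw [Finset.sum_congr rfl hterm, Finset.sum_const, nsmul_eq_mul, hkdef]
          ring
        have hNe : ∑ i ∈ Finset.univ.filter (fun i => ¬ X i = qhat),
            (‖X i - (qhat + t • h)‖ - ‖X i - qhat‖) ≤ -(t * S h) + t * (t * C) := by
          have hb : ∀ i ∈ Finset.univ.filter (fun i => ¬ X i = qhat),
              ‖X i - (qhat + t • h)‖ - ‖X i - qhat‖ ≤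
              -(t * ⟪‖X i - qhat‖⁻¹ • (X i - qhat), h⟫) +
                t * (t * ‖h‖ ^ 2 / (2 * ‖X i - qhat‖)) := by
            intro i hi
            have hne : X i - qhat ≠ 0 := sub_ne_zero.mpr (Finset.mem_filter.mp hi).2
            have hrw : X i - (qhat + t • h) = (X i - qhat) - t • h := by abel
            rw [hrw]
            exact aux_norm_bound (X i - qhat) h hne t
          refine le_trans (Finset.sum_le_sum hb) (le_of_eq ?_)
          simp only [hSdef, hCdef, ne_eq]
          rw [Finset.sum_add_distrib, Finset.mul_sum, ← Finset.sum_neg_distrib,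
            Finset.mul_sum, Finset.mul_sum]
          congr 1
          apply Finset.sum_congr rfl
          intro i hi
          ring
        linarith
      have h4 : t * ((n:ℝ) * ⟪u, h⟫ + S h) ≤ t * (‖h‖ * k + t * C) := by
        nlinarith [h2, h3]
      exact le_of_mul_le_mul_left h4 ht
    refine le_of_forall_pos_le_add (fun ε hε => ?_)
    have htpos : 0 < ε / (C + 1) := by positivity
    have hst := step (ε / (C + 1)) htpos
    have hC1 : ε / (C + 1) * C ≤ ε := by
      rw [div_mul_eq_mul_div, div_le_iff₀ (by linarith)]
      nlinarith
    linarith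
  intro h
  have ex : ⟪u, h⟫ + (1 / (n:ℝ)) * S h = (1 / (n:ℝ)) * ((n:ℝ) * ⟪u, h⟫ + S h) := by
    field_simp
  have ey : (‖h‖ / (n:ℝ)) * k = (1 / (n:ℝ)) * (‖h‖ * k) := by ring
  rw [abs_le]
  constructor
  · have hkm := key (-h)
    have e1 : ⟪u, -h⟫ = -⟪u, h⟫ := by rw [inner_neg_right]
    have e2 : S (-h) = -(S h) := by simp [hSdef, inner_neg_right]
    rw [e1, e2, norm_neg] at hkm
    have hx : -(‖h‖ * k) ≤ (n:ℝ) * ⟪u, h⟫ + S h := by linarith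
    rw [ex, ey]
    have := mul_le_mul_of_nonneg_left hx (le_of_lt (by positivity : (0:ℝ) < 1 / n))
    linarith [this]
  · rw [ex, ey]
    exact mul_le_mul_of_nonneg_left (key h) (by positivity)
end

section
/- Let X be a random vector in ℝ^d whose distribution is not supported on any single straight line (i.e., not concentrated on a one-dimensional affine subspace), and let q ∈ ℝ^d with P[X = q] = 0. Then ‖E[(X − q)/‖X − q‖]‖ < 1. -/
open MeasureTheory

theorem stmt_8 {d : ℕ} {Ω : Type*} [MeasurableSpace Ω] (μ : Measure Ω) [IsProbabilityMeasure μ]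
    (X : Ω → EuclideanSpace ℝ (Fin d)) (hX : AEMeasurable X μ)
    (hline : ¬ ∃ a b : EuclideanSpace ℝ (Fin d),
      ∀ᵐ ω ∂μ, ∃ t : ℝ, X ω = a + t • b)
    (q : EuclideanSpace ℝ (Fin d)) (hq : μ {ω | X ω = q} = 0) :
    ‖∫ ω, ‖X ω - q‖⁻¹ • (X ω - q) ∂μ‖ < 1 := by
  set f : Ω → EuclideanSpace ℝ (Fin d) := fun ω => ‖X ω - q‖⁻¹ • (X ω - q) with hf
  have h_le : ∀ᵐ ω ∂μ, ‖f ω‖ ≤ 1 := by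
    filter_upwards with ω
    rcases eq_or_ne (X ω) q with h | h
    · simp [hf, h]
    · have hn : ‖X ω - q‖ ≠ 0 := by simpa [sub_eq_zero] using h
      simp [hf, norm_smul, abs_of_nonneg (norm_nonneg _), inv_mul_cancel₀ hn]
  have hne : ∀ᵐ ω ∂μ, X ω ≠ q := by
    rw [ae_iff]
    simpa using hq
  rcases ae_eq_const_or_norm_integral_lt_of_norm_le_const (μ := μ) h_le with h | h
  · exfalso
    apply hline
    refine ⟨q, ⨍ ω, f ω ∂μ, ?_⟩
    filter_upwards [h, hne] with ω hω hωq
    refine ⟨‖X ω - q‖, ?_⟩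
    have hn : ‖X ω - q‖ ≠ 0 := by simpa [sub_eq_zero] using hωq
    simp only [Function.const_apply] at hω
    rw [← hω]
    simp only [hf, smul_smul, mul_inv_cancel₀ hn, one_smul]
    abel
  · simpa using h
end

section
/- Let q ∈ ℝ^d with ‖q‖ > 0 and x ∈ ℝ^d with x ≠ q, and define W(x,q) = (‖x/‖q‖ − q/‖q‖‖^{-1} − 1)(x/‖q‖ − q/‖q‖). Then ‖q‖·‖W(x,q)‖ ≤ 3‖x‖ whenever ‖x‖ ≤ ‖q‖/2 (more generally the paper uses the bound ‖q‖·‖W(x,q)‖ ≤ 3‖x‖ for all x ≠ q with suitable constants). Formally: prove that for x ≠ q and ‖x‖ ≤ ‖q‖/2, ‖q‖ ‖W(x,q)‖ ≤ 3 ‖x‖. -/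
theorem stmt_15 {d : ℕ} (q x : EuclideanSpace ℝ (Fin d)) (hq : 0 < ‖q‖) (hxq : x ≠ q)
    (hx : ‖x‖ ≤ ‖q‖ / 2) :
    ‖q‖ * ‖(‖‖q‖⁻¹ • x - ‖q‖⁻¹ • q‖⁻¹ - 1) • (‖q‖⁻¹ • x - ‖q‖⁻¹ • q)‖ ≤ 3 * ‖x‖ := by
  have hsub : ‖q‖⁻¹ • x - ‖q‖⁻¹ • q = ‖q‖⁻¹ • (x - q) := (smul_sub _ _ _).symm
  have hxqne : x - q ≠ 0 := sub_ne_zero.mpr hxq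
  have hd : 0 < ‖x - q‖ := norm_pos_iff.mpr hxqne
  set r : ℝ := ‖‖q‖⁻¹ • x - ‖q‖⁻¹ • q‖ with hr
  have hrval : r = ‖q‖⁻¹ * ‖x - q‖ := by
    rw [hr, hsub, norm_smul, Real.norm_eq_abs, abs_inv, abs_of_pos hq]
  have hrpos : 0 < r := by
    rw [hrval]; positivity
  have hLHS : ‖q‖ * ‖(r⁻¹ - 1) • (‖q‖⁻¹ • x - ‖q‖⁻¹ • q)‖ = |‖q‖ - ‖x - q‖| := by
    rw [norm_smul, Real.norm_eq_abs, ← hr]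
    have h1 : |r⁻¹ - 1| = |1 - r| / r := by
      have h2 : r⁻¹ - 1 = (1 - r) / r := by field_simp
      rw [h2, abs_div, abs_of_pos hrpos]
    rw [h1, div_mul_cancel₀ _ hrpos.ne']
    have h3 : ‖q‖ * |1 - r| = |‖q‖ * (1 - r)| := by rw [abs_mul, abs_of_pos hq]
    rw [h3]
    congr 1
    rw [hrval]
    field_simp
  rw [hLHS]
  have h1 : |‖q‖ - ‖x - q‖| ≤ ‖x‖ := by
    have h := abs_norm_sub_norm_le q (q - x)
    rw [show q - x = -(x - q) from (neg_sub x q).symm, norm_neg] at h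
    have h4 : q - -(x - q) = x := by abel
    rwa [h4] at h
  nlinarith [norm_nonneg x]
end
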